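/- arXiv:1909.09791 — 3 statements merged into one kernel-verified Lean document; each statement's English description precedes it below -/
import Mathlib

section
/- Let L and W be real symmetric n×n matrices with eigenvalues λ_1 ≤ ... ≤ λ_n and μ_1 ≤ ... ≤ μ_n respectively. Then for every orthogonal matrix X, tr(X^T L X W) ≥ Σ_{i=1}^n λ_i μ_{n+1-i}. -/
open Matrix Finset

-- swap lemmas
lemma swap3 {M : Type*} [AddCommMonoid M] {α β γ : Type*} (A : Finset α) (B : Finset β) (C : Finset γ)
    (f : α → β → γ → M) :
    ∑ a ∈ A, ∑ b ∈ B, ∑ c ∈ C, f a b c = ∑ b ∈ B, ∑ c ∈ C, ∑ a ∈ A, f a b c := by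
  rw [Finset.sum_comm]
  exact Finset.sum_congr rfl fun b _ => Finset.sum_comm

lemma swap4 {M : Type*} [AddCommMonoid M] {α β γ δ : Type*} (A : Finset α) (B : Finset β)
    (C : Finset γ) (Dd : Finset δ) (f : α → β → γ → δ → M) :
    ∑ a ∈ A, ∑ b ∈ B, ∑ c ∈ C, ∑ d ∈ Dd, f a b c d
      = ∑ c ∈ C, ∑ d ∈ Dd, ∑ a ∈ A, ∑ b ∈ B, f a b c d := by
  calc ∑ a ∈ A, ∑ b ∈ B, ∑ c ∈ C, ∑ d ∈ Dd, f a b c d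
      = ∑ a ∈ A, ∑ c ∈ C, ∑ d ∈ Dd, ∑ b ∈ B, f a b c d := by
        exact Finset.sum_congr rfl fun a _ => swap3 _ _ _ _
    _ = ∑ c ∈ C, ∑ d ∈ Dd, ∑ a ∈ A, ∑ b ∈ B, f a b c d := by
        rw [swap3]

lemma cnt1 {n k : ℕ} (hk : k < n) :
    ∑ i : Fin n, (if k < i.val then (1:ℝ) else 0) = n - (k+1) := by
  rw [Fin.sum_univ_eq_sum_range (fun t => if k < t then (1:ℝ) else 0)]
  rw [Finset.sum_boole]
  have : Finset.filter (fun t => k < t) (Finset.range n) = Finset.Ico (k+1) n := by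
    ext t; simp only [Finset.mem_filter, Finset.mem_range, Finset.mem_Ico]; omega
  rw [this, Nat.card_Ico]
  push_cast [Nat.cast_sub hk]
  ring

lemma sum_rev {n : ℕ} (g : Fin n → ℝ) : ∑ i : Fin n, g i.rev = ∑ i : Fin n, g i :=
  Fintype.sum_equiv (Function.Involutive.toPerm Fin.rev Fin.rev_involutive) _ _ (fun i => rfl)

lemma key {n : ℕ} (l m : Fin n → ℝ) (hl : Monotone l) (hm : Monotone m)
    (s : Fin n → Fin n → ℝ) (hs : ∀ i j, 0 ≤ s i j)
    (hrow : ∀ i, ∑ j, s i j = 1) (hcol : ∀ j, ∑ i, s i j = 1) :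
    ∑ i, l i * m i.rev ≤ ∑ i, ∑ j, l i * m j * s i j := by
  rcases Nat.eq_zero_or_pos n with h0 | hn
  · subst h0; simp
  set l0 : ℝ := l ⟨0, hn⟩ with hl0
  set m0 : ℝ := m ⟨0, hn⟩ with hm0
  set D : ℕ → ℝ := fun k => if h : k+1 < n then l ⟨k+1, h⟩ - l ⟨k, Nat.lt_of_succ_lt h⟩ else 0 with hDdef
  set E : ℕ → ℝ := fun k => if h : k+1 < n then m ⟨k+1, h⟩ - m ⟨k, Nat.lt_of_succ_lt h⟩ else 0 with hEdef
  have hD : ∀ k, 0 ≤ D k := by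
    intro k; simp only [hDdef]
    split
    · exact sub_nonneg.2 (hl (by simp [Fin.le_def]))
    · exact le_refl 0
  have hE : ∀ k, 0 ≤ E k := by
    intro k; simp only [hEdef]
    split
    · exact sub_nonneg.2 (hm (by simp [Fin.le_def]))
    · exact le_refl 0
  set χ : ℕ → Fin n → ℝ := fun k i => if k < i.val then 1 else 0 with hχdef
  have hχ01 : ∀ k i, 0 ≤ χ k i ∧ χ k i ≤ 1 := by
    intro k i; simp only [hχdef]; split <;> norm_num
  -- telescoping
  have tele : ∀ v (hv : v < n), ∑ k ∈ Finset.range v, D k = l ⟨v, hv⟩ - l0 := by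
    intro v
    induction v with
    | zero => intro hv; simp [hl0]
    | succ w ih =>
      intro hv
      rw [Finset.sum_range_succ, ih (Nat.lt_of_succ_lt hv)]
      simp only [hDdef]
      rw [dif_pos hv]
      ring
  have hA : ∀ i : Fin n, l i = l0 + ∑ k ∈ Finset.range n, χ k i * D k := by
    intro i
    have h1 : ∑ k ∈ Finset.range n, χ k i * D k = ∑ k ∈ Finset.range i.val, χ k i * D k := by
      refine (Finset.sum_subset (Finset.range_subset_range.2 (le_of_lt i.isLt)) ?_).symm
      intro k _ hk
      simp only [Finset.mem_range, not_lt] at hk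
      simp only [hχdef]
      rw [if_neg (by omega)]
      ring
    rw [h1]
    have h2 : ∑ k ∈ Finset.range i.val, χ k i * D k = ∑ k ∈ Finset.range i.val, D k := by
      refine Finset.sum_congr rfl fun k hk => ?_
      simp only [Finset.mem_range] at hk
      simp only [hχdef]
      rw [if_pos hk]; ring
    rw [h2, tele i.val i.isLt]
    ring
  have hB : ∀ j : Fin n, m j = m0 + ∑ k ∈ Finset.range n, χ k j * E k := by
    intro j
    have tele' : ∀ v (hv : v < n), ∑ k ∈ Finset.range v, E k = m ⟨v, hv⟩ - m0 := by
      intro v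
      induction v with
      | zero => intro hv; simp [hm0]
      | succ w ih =>
        intro hv
        rw [Finset.sum_range_succ, ih (Nat.lt_of_succ_lt hv)]
        simp only [hEdef]
        rw [dif_pos hv]
        ring
    have h1 : ∑ k ∈ Finset.range n, χ k j * E k = ∑ k ∈ Finset.range j.val, χ k j * E k := by
      refine (Finset.sum_subset (Finset.range_subset_range.2 (le_of_lt j.isLt)) ?_).symm
      intro k _ hk
      simp only [Finset.mem_range, not_lt] at hk
      simp only [hχdef]
      rw [if_neg (by omega)]
      ring
    rw [h1]
    have h2 : ∑ k ∈ Finset.range j.val, χ k j * E k = ∑ k ∈ Finset.range j.val, E k := by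
      refine Finset.sum_congr rfl fun k hk => ?_
      simp only [Finset.mem_range] at hk
      simp only [hχdef]
      rw [if_pos hk]; ring
    rw [h2, tele' j.val j.isLt]
    ring
  -- abbreviations
  set Af : Fin n → ℝ := fun i => ∑ k ∈ Finset.range n, χ k i * D k with hAf
  set Bf : Fin n → ℝ := fun j => ∑ k ∈ Finset.range n, χ k j * E k with hBf
  set T : ℕ → ℕ → ℝ := fun k k' => ∑ i : Fin n, ∑ j : Fin n, χ k i * χ k' j * s i j with hT
  set Bc : ℕ → ℕ → ℝ := fun k k' => ∑ i : Fin n, χ k i * χ k' i.rev with hBc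
  -- RHS expansion
  have hRHS : ∑ i : Fin n, ∑ j : Fin n, l i * m j * s i j
      = n * (l0 * m0) + l0 * (∑ j, Bf j) + m0 * (∑ i, Af i)
        + ∑ k ∈ Finset.range n, ∑ k' ∈ Finset.range n, D k * E k' * T k k' := by
    have e1 : ∑ i : Fin n, ∑ j : Fin n, l0 * m0 * s i j = n * (l0 * m0) := by
      have h : ∀ i : Fin n, ∑ j : Fin n, l0 * m0 * s i j = l0 * m0 := by
        intro i; rw [← Finset.mul_sum, hrow i, mul_one]
      rw [Finset.sum_congr rfl fun i _ => h i, Finset.sum_const, Finset.card_univ,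
        Fintype.card_fin, nsmul_eq_mul]
    have e2 : ∑ i : Fin n, ∑ j : Fin n, l0 * (Bf j * s i j) = l0 * ∑ j, Bf j := by
      rw [Finset.sum_comm]
      have h : ∀ j : Fin n, ∑ i : Fin n, l0 * (Bf j * s i j) = l0 * Bf j := by
        intro j; rw [← Finset.mul_sum, ← Finset.mul_sum, hcol j, mul_one]
      rw [Finset.sum_congr rfl fun j _ => h j, Finset.mul_sum]
    have e3 : ∑ i : Fin n, ∑ j : Fin n, m0 * (Af i * s i j) = m0 * ∑ i, Af i := by
      have h : ∀ i : Fin n, ∑ j : Fin n, m0 * (Af i * s i j) = m0 * Af i := by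
        intro i; rw [← Finset.mul_sum, ← Finset.mul_sum, hrow i, mul_one]
      rw [Finset.sum_congr rfl fun i _ => h i, Finset.mul_sum]
    have e4 : ∑ i : Fin n, ∑ j : Fin n, (Af i * Bf j) * s i j
        = ∑ k ∈ Finset.range n, ∑ k' ∈ Finset.range n, D k * E k' * T k k' := by
      have step : ∀ (i j : Fin n), (Af i * Bf j) * s i j
          = ∑ k ∈ Finset.range n, ∑ k' ∈ Finset.range n,
              D k * E k' * (χ k i * χ k' j * s i j) := by
        intro i j
        rw [hAf, hBf]
        simp only
        rw [Finset.sum_mul_sum, Finset.sum_mul]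
        refine Finset.sum_congr rfl fun k _ => ?_
        rw [Finset.sum_mul]
        exact Finset.sum_congr rfl fun k' _ => by ring
      calc ∑ i : Fin n, ∑ j : Fin n, (Af i * Bf j) * s i j
          = ∑ i : Fin n, ∑ j : Fin n, ∑ k ∈ Finset.range n, ∑ k' ∈ Finset.range n,
              D k * E k' * (χ k i * χ k' j * s i j) :=
            Finset.sum_congr rfl fun i _ => Finset.sum_congr rfl fun j _ => step i j
        _ = ∑ k ∈ Finset.range n, ∑ k' ∈ Finset.range n, ∑ i : Fin n, ∑ j : Fin n,
              D k * E k' * (χ k i * χ k' j * s i j) := swap4 _ _ _ _ _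
        _ = ∑ k ∈ Finset.range n, ∑ k' ∈ Finset.range n, D k * E k' * T k k' := by
            refine Finset.sum_congr rfl fun k _ => Finset.sum_congr rfl fun k' _ => ?_
            rw [hT]
            simp only [← Finset.mul_sum]
    calc ∑ i : Fin n, ∑ j : Fin n, l i * m j * s i j
        = ∑ i : Fin n, ∑ j : Fin n, (l0 * m0 * s i j + (l0 * (Bf j * s i j)
            + (m0 * (Af i * s i j) + (Af i * Bf j) * s i j))) := by
          refine Finset.sum_congr rfl fun i _ => Finset.sum_congr rfl fun j _ => ?_
          rw [hA i, hB j]; ring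
      _ = (∑ i : Fin n, ∑ j : Fin n, l0 * m0 * s i j)
            + ((∑ i : Fin n, ∑ j : Fin n, l0 * (Bf j * s i j))
            + ((∑ i : Fin n, ∑ j : Fin n, m0 * (Af i * s i j))
            + (∑ i : Fin n, ∑ j : Fin n, (Af i * Bf j) * s i j))) := by
          simp only [Finset.sum_add_distrib]
      _ = _ := by rw [e1, e2, e3, e4]; ring
  -- LHS expansion
  have hLHS : ∑ i : Fin n, l i * m i.rev
      = n * (l0 * m0) + l0 * (∑ j, Bf j) + m0 * (∑ i, Af i)
        + ∑ k ∈ Finset.range n, ∑ k' ∈ Finset.range n, D k * E k' * Bc k k' := by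
    have f4 : ∑ i : Fin n, Af i * Bf i.rev
        = ∑ k ∈ Finset.range n, ∑ k' ∈ Finset.range n, D k * E k' * Bc k k' := by
      have step : ∀ i : Fin n, Af i * Bf i.rev
          = ∑ k ∈ Finset.range n, ∑ k' ∈ Finset.range n,
              D k * E k' * (χ k i * χ k' i.rev) := by
        intro i
        rw [hAf, hBf]
        simp only
        rw [Finset.sum_mul_sum]
        exact Finset.sum_congr rfl fun k _ => Finset.sum_congr rfl fun k' _ => by ring
      calc ∑ i : Fin n, Af i * Bf i.rev
          = ∑ i : Fin n, ∑ k ∈ Finset.range n, ∑ k' ∈ Finset.range n,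
              D k * E k' * (χ k i * χ k' i.rev) :=
            Finset.sum_congr rfl fun i _ => step i
        _ = ∑ k ∈ Finset.range n, ∑ k' ∈ Finset.range n, ∑ i : Fin n,
              D k * E k' * (χ k i * χ k' i.rev) := swap3 _ _ _ _
        _ = ∑ k ∈ Finset.range n, ∑ k' ∈ Finset.range n, D k * E k' * Bc k k' := by
            refine Finset.sum_congr rfl fun k _ => Finset.sum_congr rfl fun k' _ => ?_
            rw [hBc]
            simp only [← Finset.mul_sum]
    have frev : ∑ i : Fin n, Bf i.rev = ∑ j, Bf j := sum_rev Bf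
    calc ∑ i : Fin n, l i * m i.rev
        = ∑ i : Fin n, (l0 * m0 + (l0 * Bf i.rev + (m0 * Af i + Af i * Bf i.rev))) := by
          refine Finset.sum_congr rfl fun i _ => ?_
          rw [hA i, hB i.rev]; ring
      _ = (∑ _i : Fin n, l0 * m0) + ((∑ i : Fin n, l0 * Bf i.rev)
            + ((∑ i : Fin n, m0 * Af i) + ∑ i : Fin n, Af i * Bf i.rev)) := by
          simp only [Finset.sum_add_distrib]
      _ = _ := by
          rw [f4, ← Finset.mul_sum, ← Finset.mul_sum, frev, Finset.sum_const,
            Finset.card_univ, Fintype.card_fin, nsmul_eq_mul, ← Finset.mul_sum]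
          ring
  rw [hRHS, hLHS]
  gcongr with k hk k' hk'
  · exact mul_nonneg (hD k) (hE k')
  · -- Bc k k' ≤ T k k'
    simp only [Finset.mem_range] at hk hk'
    have hT0 : 0 ≤ T k k' := by
      rw [hT]
      refine Finset.sum_nonneg fun i _ => Finset.sum_nonneg fun j _ => ?_
      exact mul_nonneg (mul_nonneg (hχ01 k i).1 (hχ01 k' j).1) (hs i j)
    by_cases hcase : n < k + k' + 2
    · have hz : Bc k k' = 0 := by
        rw [hBc]
        refine Finset.sum_eq_zero fun i _ => ?_
        simp only [hχdef]
        by_cases h1 : k < i.val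
        · have hrv : i.rev.val = n - (i.val + 1) := Fin.val_rev i
          have h2 : ¬ k' < i.rev.val := by omega
          rw [if_neg h2, mul_zero]
        · rw [if_neg h1, zero_mul]
      rw [hz]; exact hT0
    · push_neg at hcase
      -- Bc = n - k - k' - 2 exactly
      have hBceq : Bc k k' = ((n:ℝ) - (k+1)) + ((n:ℝ) - (k'+1)) - n := by
        have point : ∀ i : Fin n, χ k i * χ k' i.rev = χ k i + χ k' i.rev - 1 := by
          intro i
          obtain ⟨iv, hi⟩ := i
          simp only [hχdef, Fin.val_rev]
          by_cases h1 : k < iv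
          · by_cases h2 : k' < n - (iv + 1)
            · simp [h1, h2]
            · simp [h1, h2]
          · have h2 : k' < n - (iv + 1) := by omega
            simp [h1, h2]
        rw [hBc]
        simp only
        rw [Finset.sum_congr rfl fun i _ => point i]
        rw [Finset.sum_sub_distrib, Finset.sum_add_distrib]
        have c1 : ∑ i : Fin n, χ k i = (n:ℝ) - (k+1) := by
          simp only [hχdef]; exact cnt1 hk
        have c2 : ∑ i : Fin n, χ k' i.rev = (n:ℝ) - (k'+1) := by
          rw [sum_rev (fun i => χ k' i)]
          simp only [hχdef]; exact cnt1 hk'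
        rw [c1, c2, Finset.sum_const, Finset.card_univ, Fintype.card_fin, nsmul_eq_mul, mul_one]
      -- lower bound for T
      have hRnn : ∀ i : Fin n, 0 ≤ ∑ j : Fin n, (1 - χ k' j) * s i j := fun i =>
        Finset.sum_nonneg fun j _ => mul_nonneg (by linarith [(hχ01 k' j).2]) (hs i j)
      have hsplit : ∀ i : Fin n,
          ∑ j : Fin n, (1 - χ k' j) * s i j + ∑ j : Fin n, χ k' j * s i j = 1 := by
        intro i
        rw [← Finset.sum_add_distrib]
        calc ∑ j : Fin n, ((1 - χ k' j) * s i j + χ k' j * s i j)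
            = ∑ j : Fin n, s i j := Finset.sum_congr rfl fun j _ => by ring
          _ = 1 := hrow i
      have step1 : ∀ i : Fin n,
          χ k i - ∑ j : Fin n, (1 - χ k' j) * s i j ≤ ∑ j : Fin n, χ k i * χ k' j * s i j := by
        intro i
        have e : ∑ j : Fin n, χ k i * χ k' j * s i j
            = χ k i * (1 - ∑ j : Fin n, (1 - χ k' j) * s i j) := by
          have h' : ∑ j : Fin n, χ k i * χ k' j * s i j = χ k i * ∑ j : Fin n, χ k' j * s i j := by
            rw [Finset.mul_sum]
            exact Finset.sum_congr rfl fun j _ => by ring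
          rw [h']
          congr 1
          linarith [hsplit i]
        rw [e]
        have h1 := (hχ01 k i).1
        have h2 := (hχ01 k i).2
        have h3 := hRnn i
        nlinarith
      have colsum : ∑ i : Fin n, ∑ j : Fin n, (1 - χ k' j) * s i j = (k' : ℝ) + 1 := by
        rw [Finset.sum_comm]
        have h : ∀ j : Fin n, ∑ i : Fin n, (1 - χ k' j) * s i j = 1 - χ k' j := by
          intro j; rw [← Finset.mul_sum, hcol j, mul_one]
        rw [Finset.sum_congr rfl fun j _ => h j, Finset.sum_sub_distrib]
        have c2 : ∑ i : Fin n, χ k' i = (n:ℝ) - (k'+1) := by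
          simp only [hχdef]; exact cnt1 hk'
        rw [c2, Finset.sum_const, Finset.card_univ, Fintype.card_fin, nsmul_eq_mul, mul_one]
        ring
      have hsum := Finset.sum_le_sum fun i (_ : i ∈ Finset.univ) => step1 i
      rw [Finset.sum_sub_distrib] at hsum
      have c1 : ∑ i : Fin n, χ k i = (n:ℝ) - (k+1) := by
        simp only [hχdef]; exact cnt1 hk
      rw [c1, colsum] at hsum
      have hTe : T k k' = ∑ i : Fin n, ∑ j : Fin n, χ k i * χ k' j * s i j := by rw [hT]
      rw [hBceq, hTe]
      linarith
/-- Let `L` and `W` be real symmetric `n × n` matrices with eigenvalues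
`λ 0 ≤ ... ≤ λ (n-1)` and `μ 0 ≤ ... ≤ μ (n-1)` (expressed via the spectral theorem:
`L = Pᵀ * diagonal l * P`, `W = Qᵀ * diagonal m * Q` with `P, Q` orthogonal and
`l, m` monotone). Then for every orthogonal matrix `X`,
`tr(Xᵀ L X W) ≥ ∑ i, λ_i * μ_{n+1-i}` (the reversed pairing). -/
theorem stmt3 (n : ℕ) (L W : Matrix (Fin n) (Fin n) ℝ)
    (l m : Fin n → ℝ) (hl : Monotone l) (hm : Monotone m)
    (P Q : Matrix (Fin n) (Fin n) ℝ)
    (hP : Pᵀ * P = 1) (hQ : Qᵀ * Q = 1)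
    (hLdiag : L = Pᵀ * Matrix.diagonal l * P)
    (hWdiag : W = Qᵀ * Matrix.diagonal m * Q)
    (X : Matrix (Fin n) (Fin n) ℝ) (hX : Xᵀ * X = 1) :
    ∑ i : Fin n, l i * m i.rev ≤ (Xᵀ * L * X * W).trace := by
  subst hLdiag hWdiag
  set U : Matrix (Fin n) (Fin n) ℝ := P * X * Qᵀ with hU
  have hQQ : Q * Qᵀ = 1 := mul_eq_one_comm.mp hQ
  have hUtU : Uᵀ * U = 1 := by
    rw [hU]
    simp only [Matrix.transpose_mul, Matrix.transpose_transpose, Matrix.mul_assoc]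
    rw [← Matrix.mul_assoc Pᵀ P, hP, Matrix.one_mul, ← Matrix.mul_assoc Xᵀ X, hX,
      Matrix.one_mul, hQQ]
  have hUUt : U * Uᵀ = 1 := mul_eq_one_comm.mp hUtU
  have hrowU : ∀ i, ∑ j, (U i j)^2 = 1 := by
    intro i
    have h := congrFun (congrFun hUUt i) i
    rw [Matrix.mul_apply] at h
    simp only [Matrix.transpose_apply, Matrix.one_apply_eq] at h
    simpa [sq] using h
  have hcolU : ∀ j, ∑ i, (U i j)^2 = 1 := by
    intro j
    have h := congrFun (congrFun hUtU j) j
    rw [Matrix.mul_apply] at h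
    simp only [Matrix.transpose_apply, Matrix.one_apply_eq] at h
    simpa [sq, mul_comm] using h
  have htr : (Xᵀ * (Pᵀ * Matrix.diagonal l * P) * X * (Qᵀ * Matrix.diagonal m * Q)).trace
      = ∑ i, ∑ j, l i * m j * (U i j)^2 := by
    have hM : Xᵀ * (Pᵀ * Matrix.diagonal l * P) * X * (Qᵀ * Matrix.diagonal m * Q)
        = Qᵀ * (Uᵀ * Matrix.diagonal l * U * Matrix.diagonal m) * Q := by
      rw [hU]
      simp only [Matrix.transpose_mul, Matrix.transpose_transpose, Matrix.mul_assoc]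
      rw [← Matrix.mul_assoc Qᵀ Q, hQ, Matrix.one_mul]
    rw [hM, Matrix.trace_mul_comm, ← Matrix.mul_assoc, hQQ, Matrix.one_mul]
    simp only [Matrix.trace, Matrix.diag_apply, Matrix.mul_apply, Matrix.diagonal_apply,
      Matrix.transpose_apply, mul_ite, ite_mul, zero_mul, mul_zero, Finset.sum_ite_eq,
      Finset.sum_ite_eq', Finset.mem_univ, if_true]
    rw [Finset.sum_comm]
    refine Finset.sum_congr rfl fun i _ => ?_
    rw [Finset.sum_mul]
    refine Finset.sum_congr rfl fun j _ => ?_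
    ring
  rw [htr]
  exact key l m hl hm (fun i j => (U i j)^2) (fun i j => sq_nonneg _) hrowU hcolU
end

section
/- Let L be a real symmetric positive semidefinite n×n matrix with eigenvalues λ_1 ≤ ... ≤ λ_n, and let W be a real symmetric positive semidefinite n×n matrix of rank k whose nonzero eigenvalues are all at least m > 0. Then for every orthogonal matrix X, tr(X^T L X W) ≥ m · Σ_{i=1}^k λ_i. -/
open Matrix Finset


lemma card_filter_lt (n k : ℕ) (hk : k ≤ n) :
    (Finset.univ.filter (fun i : Fin n => (i : ℕ) < k)).card = k := by
  have : Finset.univ.filter (fun i : Fin n => (i : ℕ) < k)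
      = Finset.univ.map (Fin.castLEEmb hk) := by
    ext i
    simp only [Finset.mem_map, Finset.mem_filter, Finset.mem_univ, true_and, Fin.castLEEmb]
    constructor
    · intro h; exact ⟨⟨i, h⟩, rfl⟩
    · rintro ⟨j, rfl⟩; exact j.isLt
  rw [this, Finset.card_map, Finset.card_univ, Fintype.card_fin]

lemma aux_sum (n k : ℕ) (hk : k ≤ n) (l c : Fin n → ℝ)
    (hl : Monotone l) (hl0 : ∀ i, 0 ≤ l i)
    (hc0 : ∀ i, 0 ≤ c i) (hc1 : ∀ i, c i ≤ 1)
    (hsum : ∑ i, c i = (k : ℝ)) :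
    ∑ i ∈ Finset.univ.filter (fun i : Fin n => (i : ℕ) < k), l i
      ≤ ∑ i, l i * c i := by
  by_cases hk0 : k = 0
  · subst hk0
    simp only [Nat.not_lt_zero, Finset.filter_false, Finset.sum_empty]
    · exact Finset.sum_nonneg fun i _ => mul_nonneg (hl0 i) (hc0 i)
  · set t : ℝ := l ⟨k - 1, by omega⟩ with ht
    have hle : ∀ i : Fin n, (i : ℕ) < k → l i ≤ t := by
      intro i hi; exact hl (by simp [Fin.le_def]; omega)
    have hge : ∀ i : Fin n, ¬ (i : ℕ) < k → t ≤ l i := by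
      intro i hi; exact hl (by simp [Fin.le_def]; omega)
    have key : ∑ i ∈ Finset.univ.filter (fun i : Fin n => (i : ℕ) < k), (l i - t)
        ≤ ∑ i, (l i - t) * c i := by
      rw [← Finset.sum_filter_add_sum_filter_not Finset.univ
        (fun i : Fin n => (i : ℕ) < k) (fun i => (l i - t) * c i)]
      have h1 : ∑ i ∈ Finset.univ.filter (fun i : Fin n => (i : ℕ) < k), (l i - t)
          ≤ ∑ i ∈ Finset.univ.filter (fun i : Fin n => (i : ℕ) < k), (l i - t) * c i := by
        apply Finset.sum_le_sum
        intro i hi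
        simp only [Finset.mem_filter] at hi
        nlinarith [hle i hi.2, hc1 i, hc0 i]
      have h2 : (0:ℝ) ≤ ∑ i ∈ Finset.univ.filter (fun i : Fin n => ¬ (i : ℕ) < k), (l i - t) * c i := by
        apply Finset.sum_nonneg
        intro i hi
        simp only [Finset.mem_filter] at hi
        exact mul_nonneg (by linarith [hge i hi.2]) (hc0 i)
      linarith
    have hcard := card_filter_lt n k hk
    have e1 : ∑ i ∈ Finset.univ.filter (fun i : Fin n => (i : ℕ) < k), (l i - t)
        = (∑ i ∈ Finset.univ.filter (fun i : Fin n => (i : ℕ) < k), l i) - k * t := by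
      rw [Finset.sum_sub_distrib, Finset.sum_const, hcard]; simp [nsmul_eq_mul]
    have e2 : ∑ i, (l i - t) * c i = (∑ i, l i * c i) - t * ∑ i, c i := by
      rw [Finset.mul_sum, ← Finset.sum_sub_distrib]; apply Finset.sum_congr rfl; intros; ring
    rw [e1, e2, hsum] at key
    linarith

/-- Let `L` be a real symmetric PSD `n × n` matrix with eigenvalues
`λ 0 ≤ ... ≤ λ (n-1)` (via the spectral theorem: `L = Pᵀ * diagonal l * P`, `P`
orthogonal, `l` monotone nonnegative), and let `W` be a real symmetric PSD matrix
of rank `k` whose nonzero eigenvalues are all at least `m > 0`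
(`W = Qᵀ * diagonal μ * Q`, exactly `k` of the `μ i` nonzero, each nonzero one `≥ m`).
Then for every orthogonal matrix `X`, `tr(Xᵀ L X W) ≥ m * ∑_{i=1}^k λ_i`,
the sum being over the `k` smallest eigenvalues of `L`. -/
theorem stmt4 (n k : ℕ) (hk : k ≤ n) (m : ℝ) (hm : 0 < m)
    (L W : Matrix (Fin n) (Fin n) ℝ)
    (l μ : Fin n → ℝ) (hl : Monotone l) (hl0 : ∀ i, 0 ≤ l i)
    (P Q : Matrix (Fin n) (Fin n) ℝ)
    (hP : Pᵀ * P = 1) (hQ : Qᵀ * Q = 1)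
    (hLdiag : L = Pᵀ * Matrix.diagonal l * P)
    (hWdiag : W = Qᵀ * Matrix.diagonal μ * Q)
    (hμ0 : ∀ i, 0 ≤ μ i)
    (hμm : ∀ i, μ i ≠ 0 → m ≤ μ i)
    (hrank : (Finset.univ.filter (fun i => μ i ≠ 0)).card = k)
    (X : Matrix (Fin n) (Fin n) ℝ) (hX : Xᵀ * X = 1) :
    m * ∑ i ∈ Finset.univ.filter (fun i : Fin n => (i : ℕ) < k), l i
      ≤ (Xᵀ * L * X * W).trace := by
  set Y : Matrix (Fin n) (Fin n) ℝ := P * X * Qᵀ with hY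
  have hP' : P * Pᵀ = 1 := mul_eq_one_comm.mp hP
  have hQ' : Q * Qᵀ = 1 := mul_eq_one_comm.mp hQ
  have hX' : X * Xᵀ = 1 := mul_eq_one_comm.mp hX
  have hYo : Yᵀ * Y = 1 := by
    simp only [hY, Matrix.transpose_mul, Matrix.transpose_transpose]
    calc Q * (Xᵀ * Pᵀ) * (P * X * Qᵀ) = Q * (Xᵀ * (Pᵀ * P) * X) * Qᵀ := by
          simp only [Matrix.mul_assoc]
      _ = 1 := by rw [hP]; simp [Matrix.mul_assoc, hX, hQ']
  have hYo' : Y * Yᵀ = 1 := mul_eq_one_comm.mp hYo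
  -- trace rewrite
  have htr : (Xᵀ * L * X * W).trace
      = (Yᵀ * Matrix.diagonal l * Y * Matrix.diagonal μ).trace := by
    rw [hLdiag, hWdiag]
    have : Xᵀ * (Pᵀ * Matrix.diagonal l * P) * X * (Qᵀ * Matrix.diagonal μ * Q)
        = (Xᵀ * Pᵀ * Matrix.diagonal l * P * X * Qᵀ * Matrix.diagonal μ) * Q := by
      simp only [Matrix.mul_assoc]
    rw [this, Matrix.trace_mul_comm]
    congr 1
    simp only [hY, Matrix.transpose_mul, Matrix.transpose_transpose, Matrix.mul_assoc]
  have hexp : (Yᵀ * Matrix.diagonal l * Y * Matrix.diagonal μ).trace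
      = ∑ j, ∑ i, l i * μ j * (Y i j)^2 := by
    simp only [Matrix.trace, Matrix.diag, Matrix.mul_apply, Matrix.diagonal_apply,
      Matrix.transpose_apply]
    simp [Finset.sum_ite_eq, Finset.mul_sum, Finset.sum_mul]
    apply Finset.sum_congr rfl
    intro j _
    apply Finset.sum_congr rfl
    intro i _
    ring
  have hrow : ∀ i, ∑ j, (Y i j)^2 = 1 := by
    intro i
    have := congrFun (congrFun hYo' i) i
    simp only [Matrix.mul_apply, Matrix.transpose_apply, Matrix.one_apply_eq] at this
    rw [← this]
    exact Finset.sum_congr rfl fun j _ => (sq (Y i j)).symm ▸ (sq (Y i j))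
  have hcol : ∀ j, ∑ i, (Y i j)^2 = 1 := by
    intro j
    have := congrFun (congrFun hYo j) j
    simp only [Matrix.mul_apply, Matrix.transpose_apply, Matrix.one_apply_eq] at this
    rw [← this]
    exact Finset.sum_congr rfl fun i _ => sq (Y i j)
  set S := Finset.univ.filter (fun i => μ i ≠ 0) with hS
  set c : Fin n → ℝ := fun i => ∑ j ∈ S, (Y i j)^2 with hc
  have hc0 : ∀ i, 0 ≤ c i := fun i => Finset.sum_nonneg fun j _ => sq_nonneg _
  have hc1 : ∀ i, c i ≤ 1 := by
    intro i
    rw [← hrow i]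
    exact Finset.sum_le_sum_of_subset_of_nonneg (Finset.subset_univ S)
      (fun j _ _ => sq_nonneg _)
  have hcsum : ∑ i, c i = (k : ℝ) := by
    simp only [hc]
    rw [Finset.sum_comm]
    simp only [hcol]
    rw [Finset.sum_const, nsmul_eq_mul, mul_one, hrank]
  -- main chain
  rw [htr, hexp]
  have step1 : m * ∑ i, l i * c i ≤ ∑ j, ∑ i, l i * μ j * (Y i j)^2 := by
    have h1 : ∑ j, ∑ i, l i * μ j * (Y i j)^2
        = ∑ j, μ j * ∑ i, l i * (Y i j)^2 := by
      apply Finset.sum_congr rfl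
      intro j _
      rw [Finset.mul_sum]
      apply Finset.sum_congr rfl
      intro i _; ring
    rw [h1]
    have h2 : m * ∑ i, l i * c i = ∑ j ∈ S, m * ∑ i, l i * (Y i j)^2 := by
      simp only [hc, Finset.mul_sum]
      rw [Finset.sum_comm]
    rw [h2]
    calc ∑ j ∈ S, m * ∑ i, l i * (Y i j)^2
        ≤ ∑ j ∈ S, μ j * ∑ i, l i * (Y i j)^2 := by
          apply Finset.sum_le_sum
          intro j hj
          rw [hS, Finset.mem_filter] at hj
          exact mul_le_mul_of_nonneg_right (hμm j hj.2)
            (Finset.sum_nonneg fun i _ => mul_nonneg (hl0 i) (sq_nonneg _))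
      _ ≤ ∑ j, μ j * ∑ i, l i * (Y i j)^2 := by
          apply Finset.sum_le_sum_of_subset_of_nonneg (Finset.subset_univ S)
          intro j _ _
          exact mul_nonneg (hμ0 j)
            (Finset.sum_nonneg fun i _ => mul_nonneg (hl0 i) (sq_nonneg _))
  have step2 : ∑ i ∈ Finset.univ.filter (fun i : Fin n => (i : ℕ) < k), l i
      ≤ ∑ i, l i * c i := aux_sum n k hk l c hl hl0 hc0 hc1 hcsum
  calc m * ∑ i ∈ Finset.univ.filter (fun i : Fin n => (i : ℕ) < k), l i
      ≤ m * ∑ i, l i * c i := by nlinarith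
    _ ≤ _ := step1
end

section
/- For any real symmetric n×n matrix L with eigenvalues λ_1 ≤ ... ≤ λ_n and any n×n orthogonal matrix X and real symmetric PSD matrix W, the minimum of tr(X^T L X W) over orthogonal X equals Σ_{i=1}^n λ_i μ_{n+1−i}, where μ_1 ≤ ... ≤ μ_n are the eigenvalues of W; in particular the lower bound Σ_i λ_i μ_{n+1−i} is attained. -/
open Matrix Finset

section Aux

variable {n : ℕ}

/-- Rearrangement: the reversed pairing minimizes over permutations. -/
lemma aux_rearr (l m : Fin n → ℝ) (hl : Monotone l) (hm : Monotone m)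
    (σ : Equiv.Perm (Fin n)) :
    ∑ i : Fin n, l i * m i.rev ≤ ∑ j : Fin n, l (σ j) * m j := by
  have hav : Antivary l (m ∘ Fin.rev) :=
    hl.antivary (fun a b hab => hm (Fin.rev_le_rev.mpr hab))
  have h := hav.sum_smul_le_sum_comp_perm_smul (σ := Fin.revPerm.trans σ)
  simp only [smul_eq_mul, Function.comp, Equiv.trans_apply, Fin.revPerm_apply] at h
  calc ∑ i : Fin n, l i * m i.rev ≤ ∑ i : Fin n, l (σ i.rev) * m i.rev := h
    _ = ∑ j : Fin n, l (σ j) * m j := by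
        rw [← Equiv.sum_comp Fin.revPerm (fun j => l (σ j) * m j)]
        simp

lemma aux_perm_entry (σ : Equiv.Perm (Fin n)) (i j : Fin n) :
    σ.permMatrix ℝ i j = if σ i = j then 1 else 0 := by
  simp [Equiv.Perm.permMatrix, PEquiv.toMatrix_apply, Equiv.toPEquiv_apply, eq_comm]

lemma aux_perm_orth (σ : Equiv.Perm (Fin n)) :
    (σ.permMatrix ℝ)ᵀ * σ.permMatrix ℝ = 1 := by
  rw [Equiv.Perm.permMatrix, ← PEquiv.toMatrix_symm, ← PEquiv.toMatrix_trans,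
    ← Equiv.toPEquiv_symm, ← Equiv.toPEquiv_trans]
  simp

lemma aux_perm_conj (l : Fin n → ℝ) (σ : Equiv.Perm (Fin n)) :
    (σ.permMatrix ℝ)ᵀ * Matrix.diagonal l * σ.permMatrix ℝ
      = Matrix.diagonal (fun j => l (σ⁻¹ j)) := by
  have hcomm : Matrix.diagonal l * σ.permMatrix ℝ
      = σ.permMatrix ℝ * Matrix.diagonal (fun j => l (σ⁻¹ j)) := by
    ext i j
    rw [Matrix.diagonal_mul, Matrix.mul_diagonal]; simp only [aux_perm_entry]
    split_ifs with h
    · simp [← h]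
    · simp
  rw [Matrix.mul_assoc, hcomm, ← Matrix.mul_assoc, aux_perm_orth, Matrix.one_mul]

lemma aux_trace_sq (U : Matrix (Fin n) (Fin n) ℝ) (l m : Fin n → ℝ) :
    (Uᵀ * Matrix.diagonal l * U * Matrix.diagonal m).trace
      = ∑ i : Fin n, ∑ j : Fin n, (U i j)^2 * (l i * m j) := by
  rw [Matrix.trace]
  simp only [Matrix.diag_apply, Matrix.mul_apply, Matrix.diagonal_apply,
    Matrix.transpose_apply, mul_ite, ite_mul, mul_zero, zero_mul,
    Finset.sum_ite_eq, Finset.sum_ite_eq', Finset.mem_univ, if_true,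
    Finset.sum_mul, Finset.mul_sum]
  rw [Finset.sum_comm]
  refine Finset.sum_congr rfl fun i _ => Finset.sum_congr rfl fun j _ => ?_
  ring

lemma aux_key (P Q X D E : Matrix (Fin n) (Fin n) ℝ) (hQ : Qᵀ * Q = 1) :
    Xᵀ * (Pᵀ * D * P) * X * (Qᵀ * E * Q)
      = Qᵀ * ((P * X * Qᵀ)ᵀ * D * (P * X * Qᵀ) * E) * Q := by
  simp only [Matrix.transpose_mul, Matrix.transpose_transpose, Matrix.mul_assoc]
  rw [← Matrix.mul_assoc Qᵀ Q, hQ, Matrix.one_mul]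

/-- Lower bound over doubly stochastic matrices. -/
lemma aux_ds (l m : Fin n → ℝ) (hl : Monotone l) (hm : Monotone m)
    (S : Matrix (Fin n) (Fin n) ℝ) (hS : S ∈ doublyStochastic ℝ (Fin n)) :
    ∑ i : Fin n, l i * m i.rev ≤ ∑ i : Fin n, ∑ j : Fin n, S i j * (l i * m j) := by
  obtain ⟨w, hw0, hw1, hwS⟩ := exists_eq_sum_perm_of_mem_doublyStochastic hS
  have hval : ∀ i j, S i j = ∑ σ : Equiv.Perm (Fin n), w σ * (σ.permMatrix ℝ i j) := by
    intro i j
    rw [← hwS]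
    simp [Matrix.sum_apply]
  have hrow : ∀ i, ∑ j, S i j * (l i * m j)
      = ∑ σ : Equiv.Perm (Fin n), w σ * (l i * m (σ i)) := by
    intro i
    calc ∑ j, S i j * (l i * m j)
        = ∑ j, ∑ σ : Equiv.Perm (Fin n), w σ * (σ.permMatrix ℝ i j) * (l i * m j) := by
          simp only [hval, Finset.sum_mul]
      _ = ∑ σ : Equiv.Perm (Fin n), ∑ j, w σ * (σ.permMatrix ℝ i j) * (l i * m j) :=
          Finset.sum_comm
      _ = ∑ σ : Equiv.Perm (Fin n), w σ * (l i * m (σ i)) := by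
          refine Finset.sum_congr rfl fun σ _ => ?_
          simp [aux_perm_entry, Equiv.toPEquiv_apply, ite_mul, mul_ite, mul_zero, zero_mul,
            Finset.sum_ite_eq, Finset.sum_ite_eq']
  calc ∑ i : Fin n, l i * m i.rev
      = ∑ σ : Equiv.Perm (Fin n), w σ * ∑ i : Fin n, l i * m i.rev := by
        rw [← Finset.sum_mul, hw1, one_mul]
    _ ≤ ∑ σ : Equiv.Perm (Fin n), w σ * ∑ i : Fin n, l i * m (σ i) := by
        refine Finset.sum_le_sum fun σ _ => mul_le_mul_of_nonneg_left ?_ (hw0 σ)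
        calc ∑ i : Fin n, l i * m i.rev ≤ ∑ j : Fin n, l (σ⁻¹ j) * m j :=
            aux_rearr l m hl hm σ⁻¹
          _ = ∑ i : Fin n, l i * m (σ i) := by
              rw [← Equiv.sum_comp σ (fun j => l (σ⁻¹ j) * m j)]
              simp
    _ = ∑ i : Fin n, ∑ j : Fin n, S i j * (l i * m j) := by
        simp only [hrow, Finset.mul_sum]
        rw [Finset.sum_comm]

end Aux

/-- Quadratic-assignment trace bound (Finke–Burkard–Rendl): for real symmetric
matrices `L` and `W` with eigenvalues `l 0 ≤ ... ≤ l (n-1)` and `m 0 ≤ ... ≤ m (n-1)`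
(via the spectral theorem with orthogonal `P, Q` and monotone `l, m`), the minimum of
`tr(Xᵀ L X W)` over orthogonal matrices `X` equals `∑ i, l i * m (n+1-i)` (the reversed
pairing); in particular, this lower bound is attained. -/
theorem stmt18 (n : ℕ) (L W : Matrix (Fin n) (Fin n) ℝ)
    (l m : Fin n → ℝ) (hl : Monotone l) (hm : Monotone m)
    (P Q : Matrix (Fin n) (Fin n) ℝ)
    (hP : Pᵀ * P = 1) (hQ : Qᵀ * Q = 1)
    (hLdiag : L = Pᵀ * Matrix.diagonal l * P)
    (hWdiag : W = Qᵀ * Matrix.diagonal m * Q) :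
    IsLeast {t : ℝ | ∃ X : Matrix (Fin n) (Fin n) ℝ,
        Xᵀ * X = 1 ∧ t = (Xᵀ * L * X * W).trace}
      (∑ i : Fin n, l i * m i.rev) := by
  have hP' : P * Pᵀ = 1 := mul_eq_one_comm.mp hP
  have hQ' : Q * Qᵀ = 1 := mul_eq_one_comm.mp hQ
  constructor
  · -- attainment with X = Pᵀ * R * Q, R the reversal permutation matrix
    set σ : Equiv.Perm (Fin n) := Fin.revPerm with hσ
    set R : Matrix (Fin n) (Fin n) ℝ := σ.permMatrix ℝ with hR
    have hRo : Rᵀ * R = 1 := aux_perm_orth σ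
    refine ⟨Pᵀ * R * Q, ?_, ?_⟩
    · simp only [Matrix.transpose_mul, Matrix.transpose_transpose, Matrix.mul_assoc]
      rw [← Matrix.mul_assoc P Pᵀ, hP', Matrix.one_mul, ← Matrix.mul_assoc Rᵀ R, hRo,
        Matrix.one_mul, hQ]
    · have hXU : P * (Pᵀ * R * Q) * Qᵀ = R := by
        simp only [Matrix.mul_assoc]
        rw [hQ', Matrix.mul_one, ← Matrix.mul_assoc, hP', Matrix.one_mul]
      rw [hLdiag, hWdiag, aux_key P Q _ _ _ hQ, hXU,
        Matrix.trace_mul_cycle Qᵀ _ Q, ← Matrix.mul_assoc, hQ', Matrix.one_mul,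
        aux_perm_conj, Matrix.diagonal_mul_diagonal, Matrix.trace_diagonal]
      rw [← Equiv.sum_comp Fin.revPerm (fun i => l i * m i.rev)]
      simp [hσ, Equiv.Perm.inv_def, Fin.revPerm_symm]
  · -- lower bound
    rintro t ⟨X, hX, rfl⟩
    set U : Matrix (Fin n) (Fin n) ℝ := P * X * Qᵀ with hU
    have hUo : Uᵀ * U = 1 := by
      rw [hU]
      simp only [Matrix.transpose_mul, Matrix.transpose_transpose, Matrix.mul_assoc]
      rw [← Matrix.mul_assoc Pᵀ P, hP, Matrix.one_mul, ← Matrix.mul_assoc Xᵀ X, hX,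
        Matrix.one_mul, hQ']
    have hUo' : U * Uᵀ = 1 := mul_eq_one_comm.mp hUo
    rw [hLdiag, hWdiag, aux_key P Q X _ _ hQ, ← hU,
      Matrix.trace_mul_cycle Qᵀ _ Q, ← Matrix.mul_assoc, hQ', Matrix.one_mul,
      aux_trace_sq]
    refine aux_ds l m hl hm (Matrix.of fun i j => (U i j)^2) ?_
    rw [mem_doublyStochastic_iff_sum]
    refine ⟨fun i j => sq_nonneg _, fun i => ?_, fun j => ?_⟩
    · have := congrArg (fun M => M i i) hUo'
      simpa [Matrix.mul_apply, sq] using this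
    · have := congrArg (fun M => M j j) hUo
      simpa [Matrix.mul_apply, sq] using this
end
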